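/- Let $g$ be continuous on $[E_0,\infty)$ and let $\mathcal{A}g(E) = \int_{E_0}^E \sqrt{E-u}\, g(u)\, du$. Then $\left(\frac{4}{\pi} \frac{d^2}{dE^2} \mathcal{A} \frac{d}{dE} \mathcal{A}\right) g(E) = g(E)$; i.e. the composition $\frac{4}{\pi}\, \partial_E^2 \circ \mathcal{A} \circ \partial_E \circ \mathcal{A}$ is the identity on continuous functions. -/

import Mathlib

open Real intervalIntegral MeasureTheory Set Filter Topology

lemma lemA (a b : ℝ) : ∫ s in a..b, (s - a) ^ (-(1/2) : ℝ) = 2 * Real.sqrt (b - a) := by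
  have h1 : ∫ s in a..b, (s - a) ^ (-(1/2) : ℝ) = ∫ s in (a-a)..(b-a), s ^ (-(1/2):ℝ) := by
    rw [intervalIntegral.integral_comp_sub_right (fun s => s ^ (-(1/2):ℝ)) a]
  rw [h1, integral_rpow (Or.inl (by norm_num))]
  rw [sub_self, Real.sqrt_eq_rpow, Real.zero_rpow (by norm_num)]
  norm_num
  ring

lemma sqrt_one_sub_sq_half : ∫ x in (0:ℝ)..1, Real.sqrt (1 - x^2) = π/4 := by
  have heven : ∫ x in (-1:ℝ)..0, Real.sqrt (1 - x^2) = ∫ x in (0:ℝ)..1, Real.sqrt (1 - x^2) := by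
    have := intervalIntegral.integral_comp_neg (a := (0:ℝ)) (b := 1) (fun x => Real.sqrt (1 - x^2))
    simp only [neg_sq, neg_zero, neg_neg] at this
    exact this.symm
  have hadd : (∫ x in (-1:ℝ)..0, Real.sqrt (1 - x^2)) + ∫ x in (0:ℝ)..1, Real.sqrt (1 - x^2)
      = ∫ x in (-1:ℝ)..1, Real.sqrt (1 - x^2) := by
    apply intervalIntegral.integral_add_adjacent_intervals <;>
    · apply Continuous.intervalIntegrable; continuity
  rw [heven] at hadd
  have := integral_sqrt_one_sub_sq
  linarith

lemma img_phi (a b : ℝ) (hab : a < b) :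
    (fun t : ℝ => a + (b - a) * t^2) '' Ioo 0 1 = Ioo a b := by
  ext v
  constructor
  · rintro ⟨t, ⟨ht0, ht1⟩, rfl⟩
    constructor
    · simp only; nlinarith [mul_pos (sub_pos.2 hab) (pow_pos ht0 2)]
    · simp only; nlinarith [mul_lt_mul_of_pos_left (show t^2 < 1 by nlinarith) (sub_pos.2 hab)]
  · rintro ⟨hv1, hv2⟩
    have hva : (0:ℝ) < v - a := by linarith
    have hba : (0:ℝ) < b - a := by linarith
    refine ⟨Real.sqrt ((v - a)/(b - a)), ⟨?_, ?_⟩, ?_⟩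
    · exact Real.sqrt_pos.2 (div_pos hva hba)
    · rw [show (1:ℝ) = Real.sqrt 1 by simp]
      apply Real.sqrt_lt_sqrt (le_of_lt (div_pos hva hba))
      rw [div_lt_one hba]; linarith
    · simp only
      rw [Real.sq_sqrt (le_of_lt (div_pos hva hba))]
      field_simp
      ring

lemma lemB (a b : ℝ) (hab : a < b) :
    ∫ v in a..b, Real.sqrt (b - v) * (v - a) ^ (-(1/2) : ℝ) = π/2 * (b - a) := by
  have h0 : ∫ v in a..b, Real.sqrt (b - v) * (v - a) ^ (-(1/2) : ℝ)
      = ∫ v in Ioo a b, Real.sqrt (b - v) * (v - a) ^ (-(1/2) : ℝ) := by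
    rw [intervalIntegral.integral_of_le hab.le, MeasureTheory.integral_Ioc_eq_integral_Ioo]
  have hderiv : ∀ t ∈ Ioo (0:ℝ) 1, HasDerivWithinAt (fun t : ℝ => a + (b - a) * t^2)
      ((b - a) * (2 * t)) (Ioo 0 1) t := by
    intro t ht
    exact (((hasDerivAt_pow 2 t).const_mul (b-a)).const_add a).hasDerivWithinAt.congr_deriv
      (by ring)
  have hinj : InjOn (fun t : ℝ => a + (b - a) * t^2) (Ioo 0 1) := by
    intro s hs t ht h
    simp only at h
    have : s^2 = t^2 := by
      have hba : b - a ≠ 0 := by linarith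
      nlinarith
    nlinarith [hs.1, ht.1]
  have hcov := integral_image_eq_integral_abs_deriv_smul measurableSet_Ioo hderiv hinj
    (fun v => Real.sqrt (b - v) * (v - a) ^ (-(1/2) : ℝ))
  rw [h0, ← img_phi a b hab, hcov]
  have hcongr : ∫ t in Ioo (0:ℝ) 1, |(b - a) * (2 * t)| •
        (Real.sqrt (b - (a + (b - a) * t^2)) * ((a + (b - a) * t^2) - a) ^ (-(1/2) : ℝ))
      = ∫ t in Ioo (0:ℝ) 1, 2 * (b - a) * Real.sqrt (1 - t^2) := by
    apply MeasureTheory.setIntegral_congr_fun measurableSet_Ioo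
    intro t ht
    obtain ⟨ht0, ht1⟩ := ht
    have hba : (0:ℝ) < b - a := by linarith
    simp only [smul_eq_mul]
    have h1 : b - (a + (b - a) * t^2) = (b - a) * (1 - t^2) := by ring
    have h2 : (a + (b - a) * t^2) - a = (b - a) * t^2 := by ring
    rw [h1, h2, Real.sqrt_mul hba.le, Real.mul_rpow hba.le (by positivity),
      abs_of_pos (by positivity)]
    have h3 : (t^2 : ℝ) ^ (-(1/2) : ℝ) = t⁻¹ := by
      rw [← Real.rpow_natCast t 2, ← Real.rpow_mul ht0.le]
      norm_num
      rw [Real.rpow_neg_one]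
    have h4 : (b - a) ^ (-(1/2) : ℝ) = (Real.sqrt (b-a))⁻¹ := by
      rw [Real.rpow_neg hba.le, Real.sqrt_eq_rpow]
    rw [h3, h4]
    have hsb : Real.sqrt (b - a) > 0 := Real.sqrt_pos.2 hba
    field_simp
  rw [hcongr]
  rw [MeasureTheory.integral_const_mul, ← MeasureTheory.integral_Ioc_eq_integral_Ioo,
    ← intervalIntegral.integral_of_le (by norm_num : (0:ℝ) ≤ 1), sqrt_one_sub_sq_half]
  ring

-- ∫ u in a..s, (s-u)^(-1/2) du = 2√(s-a)
lemma lemA' (a s : ℝ) : ∫ u in a..s, (s - u) ^ (-(1/2) : ℝ) = 2 * Real.sqrt (s - a) := by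
  rw [intervalIntegral.integral_comp_sub_left (fun x => x ^ (-(1/2):ℝ)) s]
  rw [sub_self, integral_rpow (Or.inl (by norm_num))]
  rw [Real.sqrt_eq_rpow, Real.zero_rpow (by norm_num)]
  norm_num
  ring

lemma integrableOn_slice (a s : ℝ) :
    IntegrableOn (fun u => (s - u) ^ (-(1/2) : ℝ)) (Ioo a s) := by
  rcases le_or_gt s a with h | h
  · rw [Ioo_eq_empty (by exact fun hh => absurd hh (not_lt.2 h))]
    exact integrableOn_empty
  · have h1 : IntervalIntegrable (fun x : ℝ => x ^ (-(1/2):ℝ)) volume 0 (s - a) :=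
      intervalIntegrable_rpow' (by norm_num)
    have h2 := h1.comp_sub_left s
    simp only [sub_zero] at h2
    -- h2 : IntervalIntegrable (fun u => (s - u) ^ (-(1/2))) volume s (s - (s - a))
    have h3 : s - (s - a) = a := by ring
    rw [h3] at h2
    have := h2.symm
    rw [intervalIntegrable_iff_integrableOn_Ioo_of_le h.le] at this
    exact this

lemma fubini_triangle (a b : ℝ) (hab : a < b) (k : ℝ × ℝ → ℝ) (hk : Measurable k)
    (C : ℝ) (hC : 0 ≤ C)
    (hbound : ∀ p : ℝ × ℝ, a < p.2 → p.2 < p.1 → p.1 < b →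
      |k p| ≤ C * (p.1 - p.2) ^ (-(1/2) : ℝ)) :
    (∫ s in a..b, ∫ u in a..s, k (s, u)) = ∫ u in a..b, ∫ s in u..b, k (s, u) := by
  classical
  set T : Set (ℝ × ℝ) := {p | a < p.2 ∧ p.2 < p.1 ∧ p.1 < b} with hTdef
  have hTopen : IsOpen T :=
    (isOpen_lt continuous_const continuous_snd).inter
      ((isOpen_lt continuous_snd continuous_fst).inter
        (isOpen_lt continuous_fst continuous_const))
  set K : ℝ × ℝ → ℝ := T.indicator k with hKdef
  have hKmeas : Measurable K := hk.indicator hTopen.measurableSet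
  have hKslice : ∀ (s u : ℝ), K (s, u) =
      (if s ∈ Ioo a b then (Ioo a s).indicator (fun u => k (s, u)) else 0) u := by
    intro s u
    by_cases hs : s ∈ Ioo a b
    · rw [if_pos hs]
      by_cases hu : u ∈ Ioo a s
      · rw [Set.indicator_of_mem hu, hKdef,
          Set.indicator_of_mem (show (s,u) ∈ T from ⟨hu.1, hu.2, hs.2⟩)]
      · rw [Set.indicator_of_notMem hu, hKdef, Set.indicator_of_notMem]
        intro hmem
        exact hu ⟨hmem.1, hmem.2.1⟩
    · rw [if_neg hs]
      rw [hKdef, Set.indicator_of_notMem]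
      · rfl
      · intro hmem
        obtain ⟨h1, h2, h3⟩ := hmem
        exact hs ⟨lt_trans h1 h2, h3⟩
  have hKslice' : ∀ (u s : ℝ), K (s, u) =
      (if u ∈ Ioo a b then (Ioo u b).indicator (fun s => k (s, u)) else 0) s := by
    intro u s
    by_cases hu : u ∈ Ioo a b
    · rw [if_pos hu]
      by_cases hs : s ∈ Ioo u b
      · rw [Set.indicator_of_mem hs, hKdef,
          Set.indicator_of_mem (show (s,u) ∈ T from ⟨hu.1, hs.1, hs.2⟩)]
      · rw [Set.indicator_of_notMem hs, hKdef, Set.indicator_of_notMem]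
        intro hmem
        exact hs ⟨hmem.2.1, hmem.2.2⟩
    · rw [if_neg hu]
      rw [hKdef, Set.indicator_of_notMem]
      · rfl
      · intro hmem
        obtain ⟨h1, h2, h3⟩ := hmem
        exact hu ⟨h1, lt_trans h2 h3⟩
  have hInt1 : ∀ s : ℝ, Integrable (fun u => K (s, u)) := by
    intro s
    have hfun : (fun u => K (s, u)) =
        if s ∈ Ioo a b then (Ioo a s).indicator (fun u => k (s, u)) else 0 := by
      funext u; rw [hKslice s u]
    rw [hfun]
    by_cases hs : s ∈ Ioo a b
    · rw [if_pos hs]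
      rw [integrable_indicator_iff measurableSet_Ioo]
      apply Integrable.mono' ((integrableOn_slice a s).const_mul C)
      · exact (hk.comp (measurable_prodMk_left)).aestronglyMeasurable.restrict
      · filter_upwards [ae_restrict_mem measurableSet_Ioo] with u hu
        exact hbound (s, u) hu.1 hu.2 hs.2
    · rw [if_neg hs]; exact integrable_zero _ _ _
  have hKint : Integrable K ((volume : Measure ℝ).prod volume) := by
    rw [MeasureTheory.integrable_prod_iff hKmeas.aestronglyMeasurable]
    refine ⟨Filter.Eventually.of_forall hInt1, ?_⟩
    have hdom : Integrable ((Ioo a b).indicator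
        (fun _ : ℝ => C * (2 * Real.sqrt (b - a)))) := by
      rw [integrable_indicator_iff measurableSet_Ioo]
      exact integrableOn_const measure_Ioo_lt_top.ne
    refine hdom.mono' ((hKmeas.norm).aestronglyMeasurable.integral_prod_right') ?_
    filter_upwards with s
    by_cases hs : s ∈ Ioo a b
    · rw [Set.indicator_of_mem hs]
      have hb1 : ∀ u, ‖K (s, u)‖ ≤ (Ioo a s).indicator
          (fun u => C * (s - u) ^ (-(1/2):ℝ)) u := by
        intro u
        rw [hKslice s u, if_pos hs]
        by_cases hu : u ∈ Ioo a s
        · rw [Set.indicator_of_mem hu, Set.indicator_of_mem hu, Real.norm_eq_abs]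
          exact hbound (s, u) hu.1 hu.2 hs.2
        · rw [Set.indicator_of_notMem hu, Set.indicator_of_notMem hu]
          simp
      have hnn : 0 ≤ ∫ u, ‖K (s, u)‖ := integral_nonneg (fun u => norm_nonneg _)
      rw [Real.norm_eq_abs, abs_of_nonneg hnn]
      calc (∫ u, ‖K (s, u)‖)
          ≤ ∫ u, (Ioo a s).indicator (fun u => C * (s - u) ^ (-(1/2):ℝ)) u := by
            apply MeasureTheory.integral_mono_of_nonneg
            · filter_upwards with u; positivity
            · exact (integrable_indicator_iff measurableSet_Ioo).2
                ((integrableOn_slice a s).const_mul C)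
            · exact Filter.Eventually.of_forall hb1
        _ = C * (2 * Real.sqrt (s - a)) := by
            rw [MeasureTheory.integral_indicator measurableSet_Ioo,
              ← MeasureTheory.integral_Ioc_eq_integral_Ioo,
              ← intervalIntegral.integral_of_le hs.1.le,
              intervalIntegral.integral_const_mul, lemA' a s]
        _ ≤ C * (2 * Real.sqrt (b - a)) := by
            have := Real.sqrt_le_sqrt (show s - a ≤ b - a by linarith [hs.2.le])
            nlinarith
    · rw [Set.indicator_of_notMem hs]
      have hz : ∀ u, K (s, u) = 0 := by
        intro u; rw [hKslice s u, if_neg hs]; rfl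
      simp [hz]
  -- now the iterated integral manipulations
  have hL : (∫ s in a..b, ∫ u in a..s, k (s, u)) = ∫ s, ∫ u, K (s, u) := by
    rw [intervalIntegral.integral_of_le hab.le, MeasureTheory.integral_Ioc_eq_integral_Ioo]
    rw [← MeasureTheory.setIntegral_eq_integral_of_forall_compl_eq_zero
      (s := Ioo a b) (f := fun s => ∫ u, K (s, u))]
    · apply MeasureTheory.setIntegral_congr_fun measurableSet_Ioo
      intro s hs
      show (∫ u in a..s, k (s, u)) = ∫ u, K (s, u)
      have hfun : (fun u => K (s, u)) = (Ioo a s).indicator (fun u => k (s, u)) := by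
        funext u; rw [hKslice s u, if_pos hs]
      rw [hfun, MeasureTheory.integral_indicator measurableSet_Ioo,
        ← MeasureTheory.integral_Ioc_eq_integral_Ioo,
        ← intervalIntegral.integral_of_le hs.1.le]
    · intro s hs
      have hz : ∀ u, K (s, u) = 0 := by
        intro u; rw [hKslice s u, if_neg hs]; rfl
      simp [hz]
  have hR : (∫ u in a..b, ∫ s in u..b, k (s, u)) = ∫ u, ∫ s, K (s, u) := by
    rw [intervalIntegral.integral_of_le hab.le, MeasureTheory.integral_Ioc_eq_integral_Ioo]
    rw [← MeasureTheory.setIntegral_eq_integral_of_forall_compl_eq_zero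
      (s := Ioo a b) (f := fun u => ∫ s, K (s, u))]
    · apply MeasureTheory.setIntegral_congr_fun measurableSet_Ioo
      intro u hu
      show (∫ s in u..b, k (s, u)) = ∫ s, K (s, u)
      have hfun : (fun s => K (s, u)) = (Ioo u b).indicator (fun s => k (s, u)) := by
        funext s; rw [hKslice' u s, if_pos hu]
      rw [hfun, MeasureTheory.integral_indicator measurableSet_Ioo,
        ← MeasureTheory.integral_Ioc_eq_integral_Ioo,
        ← intervalIntegral.integral_of_le hu.2.le]
    · intro u hu
      have hz : ∀ s, K (s, u) = 0 := by
        intro s; rw [hKslice' u s, if_neg hu]; rfl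
      simp [hz]
  rw [hL, hR]
  exact MeasureTheory.integral_integral_swap hKint

-- substitution: for E₀ < s
lemma h_eq_subst (g : ℝ → ℝ) (E₀ s : ℝ) (hs : E₀ < s) :
    ∫ u in E₀..s, (s - u) ^ (-(1/2):ℝ) * g u
      = 2 * ∫ t in (0:ℝ)..Real.sqrt (s - E₀), g (s - t^2) := by
  set r := Real.sqrt (s - E₀) with hr
  have hr0 : 0 < r := Real.sqrt_pos.2 (by linarith)
  have hr2 : r^2 = s - E₀ := Real.sq_sqrt (by linarith)
  have himg : (fun t : ℝ => s - t^2) '' Ioo 0 r = Ioo E₀ s := by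
    ext v
    constructor
    · rintro ⟨t, ⟨ht0, ht1⟩, rfl⟩
      constructor
      · simp only; nlinarith
      · simp only; nlinarith
    · rintro ⟨hv1, hv2⟩
      refine ⟨Real.sqrt (s - v), ⟨Real.sqrt_pos.2 (by linarith), ?_⟩, ?_⟩
      · rw [hr]; exact Real.sqrt_lt_sqrt (by linarith) (by linarith)
      · simp only; rw [Real.sq_sqrt (by linarith)]; ring
  have hderiv : ∀ t ∈ Ioo (0:ℝ) r, HasDerivWithinAt (fun t : ℝ => s - t^2)
      (-(2*t)) (Ioo 0 r) t := by
    intro t ht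
    exact ((hasDerivAt_pow 2 t).const_sub s).hasDerivWithinAt.congr_deriv (by ring)
  have hinj : InjOn (fun t : ℝ => s - t^2) (Ioo 0 r) := by
    intro x hx y hy h
    simp only at h
    have : x^2 = y^2 := by nlinarith
    nlinarith [hx.1, hy.1]
  have hcov := integral_image_eq_integral_abs_deriv_smul measurableSet_Ioo hderiv hinj
    (fun u => (s - u) ^ (-(1/2):ℝ) * g u)
  rw [intervalIntegral.integral_of_le hs.le, MeasureTheory.integral_Ioc_eq_integral_Ioo,
    ← himg, hcov]
  have hcongr : ∫ t in Ioo (0:ℝ) r, |(-(2*t))| •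
        ((s - (s - t^2)) ^ (-(1/2):ℝ) * g (s - t^2))
      = ∫ t in Ioo (0:ℝ) r, 2 * g (s - t^2) := by
    apply MeasureTheory.setIntegral_congr_fun measurableSet_Ioo
    intro t ht
    obtain ⟨ht0, ht1⟩ := ht
    simp only [smul_eq_mul]
    have h1 : s - (s - t^2) = t^2 := by ring
    rw [h1]
    have h3 : (t^2 : ℝ) ^ (-(1/2) : ℝ) = t⁻¹ := by
      rw [← Real.rpow_natCast t 2, ← Real.rpow_mul ht0.le]
      norm_num
      rw [Real.rpow_neg_one]
    rw [h3, abs_of_neg (by linarith : -(2*t) < 0)]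
    field_simp
  rw [hcongr, MeasureTheory.integral_const_mul, ← MeasureTheory.integral_Ioc_eq_integral_Ioo,
    ← intervalIntegral.integral_of_le hr0.le]

lemma H_cont (g : ℝ → ℝ) (hg : Continuous g) (E₀ : ℝ) :
    Continuous fun s => ∫ t in (0:ℝ)..Real.sqrt (s - E₀), g (s - t^2) := by
  apply intervalIntegral.continuous_parametric_intervalIntegral_of_continuous
  · exact hg.comp (continuous_fst.sub (continuous_snd.pow 2))
  · exact Real.continuous_sqrt.comp (continuous_id.sub continuous_const)

lemma rpow_neg_half_eq (x : ℝ) : x ^ (-(1/2):ℝ) = (Real.sqrt x)⁻¹ := by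
  rcases lt_trichotomy x 0 with hx | hx | hx
  · rw [Real.rpow_def_of_neg hx, Real.sqrt_eq_zero_of_nonpos hx.le]
    have : Real.cos (-(1/2) * π) = 0 := by
      rw [neg_mul, Real.cos_neg]
      rw [show (1/2) * π = π/2 by ring, Real.cos_pi_div_two]
    rw [this]
    simp
  · subst hx; rw [Real.zero_rpow (by norm_num)]; simp
  · rw [Real.rpow_neg hx.le, Real.sqrt_eq_rpow]

section Core
variable (E₀ : ℝ) (g : ℝ → ℝ)

lemma core (hg : Continuous g) (E : ℝ) (hE : E₀ < E) :
    (4 / π) * deriv (deriv (fun x => ∫ v in E₀..x,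
        Real.sqrt (x - v) * deriv (fun y => ∫ u in E₀..y, Real.sqrt (y - u) * g u) v)) E
      = g E := by
  set F : ℝ → ℝ := fun y => ∫ u in E₀..y, Real.sqrt (y - u) * g u with hFdef
  set h : ℝ → ℝ := fun s => (∫ u in E₀..s, (s - u) ^ (-(1/2):ℝ) * g u) / 2 with hhdef
  set H : ℝ → ℝ := fun s => ∫ t in (0:ℝ)..Real.sqrt (s - E₀), g (s - t^2) with hHdef
  set Φ : ℝ → ℝ := fun x => ∫ v in E₀..x, Real.sqrt (x - v) * deriv F v with hPhidef
  set P : ℝ → ℝ := fun x => ∫ u in E₀..x, (x - u) * g u with hPdef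
  set Q : ℝ → ℝ := fun x => ∫ u in E₀..x, g u with hQdef
  -- h = H on Ioi E₀
  have hhH : ∀ s, E₀ < s → h s = H s := by
    intro s hs
    rw [hhdef]
    simp only
    rw [h_eq_subst g E₀ s hs, hHdef]
    ring
  have hHc : Continuous H := H_cont g hg E₀
  have hhcont : ContinuousOn h (Ioi E₀) := by
    intro s hs
    apply (hHc.continuousAt.congr ?_).continuousWithinAt
    filter_upwards [Ioi_mem_nhds hs] with y hy
    exact (hhH y hy).symm
  -- bound for g on compacts
  obtain ⟨Cg, hCg⟩ : ∃ C : ℝ, 0 ≤ C ∧ ∀ u ∈ Icc E₀ (E + 1), |g u| ≤ C := by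
    obtain ⟨C, hC⟩ := isCompact_Icc.exists_bound_of_continuousOn
      (hg.continuousOn : ContinuousOn g (Icc E₀ (E + 1)))
    exact ⟨max C 0, le_max_right _ _, fun u hu =>
      le_trans (by simpa using hC u hu) (le_max_left _ _)⟩
  -- F x = ∫ s in E₀..x, h s for E₀ < x ≤ E+1 (we only need x in a nbhd)
  have hFrep : ∀ x, E₀ < x → x < E + 1 → F x = ∫ s in E₀..x, h s := by
    intro x hx hx1
    have hfub := fubini_triangle E₀ x hx
      (fun p => (p.1 - p.2) ^ (-(1/2):ℝ) * g p.2)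
      (by
        apply Measurable.mul
        · have : (fun p : ℝ × ℝ => (p.1 - p.2) ^ (-(1/2):ℝ))
              = fun p : ℝ × ℝ => (Real.sqrt (p.1 - p.2))⁻¹ := by
            funext p; exact rpow_neg_half_eq _
          rw [this]
          exact ((measurable_fst.sub measurable_snd).sqrt).inv
        · exact hg.measurable.comp measurable_snd)
      Cg hCg.1
      (by
        intro p h1 h2 h3
        rw [abs_mul, abs_of_nonneg (Real.rpow_nonneg ?_ _)]
        · rw [mul_comm]
          apply mul_le_mul_of_nonneg_right _ (Real.rpow_nonneg (by linarith) _)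
          exact hCg.2 p.2 ⟨h1.le, by linarith⟩
        · linarith)
    have hL : ∫ s in E₀..x, h s
        = (∫ s in E₀..x, ∫ u in E₀..s, (s - u) ^ (-(1/2):ℝ) * g u) / 2 := by
      rw [hhdef, intervalIntegral.integral_div]
    have hR : (∫ u in E₀..x, ∫ s in u..x, (s - u) ^ (-(1/2):ℝ) * g u) = 2 * F x := by
      rw [hFdef]
      simp only
      rw [← intervalIntegral.integral_const_mul]
      apply intervalIntegral.integral_congr
      intro u hu
      show (∫ s in u..x, (s - u) ^ (-(1/2):ℝ) * g u) = 2 * (Real.sqrt (x - u) * g u)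
      rw [intervalIntegral.integral_mul_const, lemA u x]
      ring
    rw [hL, hfub, hR]
    ring
  -- HasDerivAt F (h v) v for v > E₀
  have hF' : ∀ v, E₀ < v → v < E + 1 → HasDerivAt F (h v) v := by
    intro v hv hv1
    have hint : IntervalIntegrable h volume E₀ v := by
      rw [intervalIntegrable_iff_integrableOn_Ioc_of_le hv.le]
      apply ((hHc.intervalIntegrable E₀ v).1.mono_set
        (by simp [hv.le])).congr_fun
      · intro s hs
        exact (hhH s hs.1).symm
      · exact measurableSet_Ioc
    have hmeas : StronglyMeasurableAtFilter h (𝓝 v) volume :=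
      ContinuousOn.stronglyMeasurableAtFilter isOpen_Ioi hhcont v hv
    have hca : ContinuousAt h v := by
      apply hHc.continuousAt.congr
      filter_upwards [Ioi_mem_nhds hv] with y hy
      exact (hhH y hy).symm
    have hG := intervalIntegral.integral_hasDerivAt_right hint hmeas hca
    apply hG.congr_of_eventuallyEq
    filter_upwards [Ioi_mem_nhds hv, Iio_mem_nhds hv1] with y hy hy1
    exact hFrep y hy hy1
  -- Φ x = (π/4) P x for E₀ < x < E+1
  have hPhirep : ∀ x, E₀ < x → x < E + 1 → Φ x = (π/4) * P x := by
    intro x hx hx1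
    have step1 : Φ x = ∫ v in E₀..x, Real.sqrt (x - v) * h v := by
      rw [hPhidef]
      apply intervalIntegral.integral_congr_ae
      rw [uIoc_of_le hx.le]
      filter_upwards with v hv
      rw [(hF' v hv.1 (lt_of_le_of_lt hv.2 hx1)).deriv]
    have step2 : ∫ v in E₀..x, Real.sqrt (x - v) * h v
        = (∫ v in E₀..x, ∫ u in E₀..v,
            Real.sqrt (x - v) * ((v - u) ^ (-(1/2):ℝ) * g u)) / 2 := by
      rw [← intervalIntegral.integral_div]
      apply intervalIntegral.integral_congr
      intro v hv
      show Real.sqrt (x - v) * h v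
          = (∫ u in E₀..v, Real.sqrt (x - v) * ((v - u) ^ (-(1/2):ℝ) * g u)) / 2
      rw [intervalIntegral.integral_const_mul, hhdef]
      ring
    have hfub := fubini_triangle E₀ x hx
      (fun p => Real.sqrt (x - p.1) * ((p.1 - p.2) ^ (-(1/2):ℝ) * g p.2))
      (by
        apply Measurable.mul
        · exact (measurable_const.sub measurable_fst).sqrt
        apply Measurable.mul
        · have : (fun p : ℝ × ℝ => (p.1 - p.2) ^ (-(1/2):ℝ))
              = fun p : ℝ × ℝ => (Real.sqrt (p.1 - p.2))⁻¹ := by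
            funext p; exact rpow_neg_half_eq _
          rw [this]
          exact ((measurable_fst.sub measurable_snd).sqrt).inv
        · exact hg.measurable.comp measurable_snd)
      (Real.sqrt (x - E₀) * Cg) (mul_nonneg (Real.sqrt_nonneg _) hCg.1)
      (by
        intro p h1 h2 h3
        rw [abs_mul, abs_mul]
        rw [abs_of_nonneg (Real.sqrt_nonneg _),
          abs_of_nonneg (Real.rpow_nonneg (by linarith) _)]
        have b1 : Real.sqrt (x - p.1) ≤ Real.sqrt (x - E₀) :=
          Real.sqrt_le_sqrt (by linarith)
        have b2 : |g p.2| ≤ Cg := hCg.2 p.2 ⟨h1.le, by linarith⟩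
        have b3 : (0:ℝ) ≤ (p.1 - p.2) ^ (-(1/2):ℝ) := Real.rpow_nonneg (by linarith) _
        calc Real.sqrt (x - p.1) * ((p.1 - p.2) ^ (-(1/2):ℝ) * |g p.2|)
            ≤ Real.sqrt (x - E₀) * ((p.1 - p.2) ^ (-(1/2):ℝ) * Cg) := by
              apply mul_le_mul b1 _ (by positivity) (Real.sqrt_nonneg _)
              exact mul_le_mul_of_nonneg_left b2 b3
          _ = Real.sqrt (x - E₀) * Cg * (p.1 - p.2) ^ (-(1/2):ℝ) := by ring)
    have step3 : (∫ u in E₀..x, ∫ v in u..x,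
        Real.sqrt (x - v) * ((v - u) ^ (-(1/2):ℝ) * g u)) = ∫ u in E₀..x, π/2 * (x - u) * g u := by
      apply intervalIntegral.integral_congr_ae
      rw [uIoc_of_le hx.le]
      filter_upwards with u hu
      rcases eq_or_lt_of_le hu.2 with heq | hlt
      · subst heq
        simp
      · have : ∫ v in u..x, Real.sqrt (x - v) * ((v - u) ^ (-(1/2):ℝ) * g u)
            = (∫ v in u..x, Real.sqrt (x - v) * (v - u) ^ (-(1/2):ℝ)) * g u := by
          rw [← intervalIntegral.integral_mul_const]
          apply intervalIntegral.integral_congr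
          intro v hv; ring
        rw [this, lemB u x hlt]
    have step4 : (∫ u in E₀..x, π/2 * (x - u) * g u) = (π/2) * P x := by
      rw [hPdef, ← intervalIntegral.integral_const_mul]
      apply intervalIntegral.integral_congr
      intro u hu; ring
    rw [step1, step2, hfub, step3, step4]
    ring
  -- derivative of P
  have hP' : ∀ y : ℝ, HasDerivAt P (Q y) y := by
    intro y
    have hPeq : P = fun x => x * Q x - ∫ u in E₀..x, u * g u := by
      funext x
      show (∫ u in E₀..x, (x - u) * g u) = x * (∫ u in E₀..x, g u) - ∫ u in E₀..x, u * g u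
      have hig : IntervalIntegrable (fun u : ℝ => u * g u) volume E₀ x :=
        (continuous_id.mul hg).intervalIntegrable E₀ x
      have hxg : IntervalIntegrable (fun u : ℝ => x * g u) volume E₀ x :=
        (hg.intervalIntegrable E₀ x).const_mul x
      rw [← intervalIntegral.integral_const_mul, ← intervalIntegral.integral_sub hxg hig]
      apply intervalIntegral.integral_congr
      intro u hu; ring
    rw [hPeq]
    have hQ' : HasDerivAt Q (g y) y :=
      intervalIntegral.integral_hasDerivAt_right (hg.intervalIntegrable E₀ y)
        (hg.stronglyMeasurableAtFilter volume (𝓝 y)) hg.continuousAt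
    have hR' : HasDerivAt (fun x => ∫ u in E₀..x, u * g u) (y * g y) y :=
      intervalIntegral.integral_hasDerivAt_right
        ((continuous_id.mul hg).intervalIntegrable E₀ y)
        ((continuous_id.mul hg).stronglyMeasurableAtFilter volume (𝓝 y))
        (continuous_id.mul hg).continuousAt
    have := ((hasDerivAt_id y).mul hQ').sub hR'
    refine this.congr_deriv ?_
    rw [hQdef]
    simp only [id]
    ring
  -- deriv Φ = (π/4) Q on the strip
  have hdPhi : ∀ y, E₀ < y → y < E + 1 → deriv Φ y = (π/4) * Q y := by
    intro y hy hy1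
    have : Φ =ᶠ[nhds y] fun x => (π/4) * P x := by
      filter_upwards [Ioi_mem_nhds hy, Iio_mem_nhds hy1] with x hx hx1
      exact hPhirep x hx hx1
    rw [Filter.EventuallyEq.deriv_eq this]
    exact (((hP' y).const_mul (π/4)).deriv)
  -- final: second derivative at E
  have hfinal : deriv (deriv Φ) E = (π/4) * g E := by
    have h1 : deriv Φ =ᶠ[nhds E] fun y => (π/4) * Q y := by
      filter_upwards [Ioi_mem_nhds hE, Iio_mem_nhds (by linarith : E < E + 1)] with y hy hy1
      exact hdPhi y hy hy1
    rw [Filter.EventuallyEq.deriv_eq h1]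
    have hQ' : HasDerivAt Q (g E) E :=
      intervalIntegral.integral_hasDerivAt_right (hg.intervalIntegrable E₀ E)
        (hg.stronglyMeasurableAtFilter volume (𝓝 E)) hg.continuousAt
    exact ((hQ'.const_mul (π/4)).deriv)
  rw [hfinal]
  field_simp

end Core

/-- With `𝒜g(E) = ∫_{E₀}^E √(E-u) g(u) du`, the composition
`(4/π) ∂_E² ∘ 𝒜 ∘ ∂_E ∘ 𝒜` is the identity on continuous functions, for `E > E₀`. -/
theorem abel_type_inversion (E₀ : ℝ) (g : ℝ → ℝ) (hg : ContinuousOn g (Set.Ici E₀))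
    (A : (ℝ → ℝ) → ℝ → ℝ)
    (hA : ∀ f : ℝ → ℝ, ∀ E : ℝ, A f E = ∫ u in E₀..E, Real.sqrt (E - u) * f u)
    (E : ℝ) (hE : E₀ < E) :
    (4 / π) * deriv (deriv (A (fun u => deriv (A g) u))) E = g E := by
  classical
  set g' : ℝ → ℝ := fun u => g (max u E₀) with hg'def
  have hg'c : Continuous g' :=
    hg.comp_continuous (continuous_id.max continuous_const)
      (fun u => mem_Ici.2 (le_max_right _ _))
  have hFeq : ∀ x, E₀ ≤ x →
      A g x = ∫ u in E₀..x, Real.sqrt (x - u) * g' u := by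
    intro x hx
    rw [hA g x]
    apply intervalIntegral.integral_congr_ae
    rw [uIoc_of_le hx]
    filter_upwards with u hu
    rw [hg'def]
    simp only
    rw [max_eq_left hu.1.le]
  have hdF : ∀ v, E₀ < v → deriv (A g) v
      = deriv (fun y => ∫ u in E₀..y, Real.sqrt (y - u) * g' u) v := by
    intro v hv
    apply Filter.EventuallyEq.deriv_eq
    filter_upwards [Ioi_mem_nhds hv] with x hx
    exact hFeq x (le_of_lt hx)
  have hPhieq : ∀ x, E₀ < x → A (fun u => deriv (A g) u) x
      = ∫ v in E₀..x, Real.sqrt (x - v)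
          * deriv (fun y => ∫ u in E₀..y, Real.sqrt (y - u) * g' u) v := by
    intro x hx
    rw [hA _ x]
    apply intervalIntegral.integral_congr_ae
    rw [uIoc_of_le hx.le]
    filter_upwards with v hv
    rw [hdF v hv.1]
  have hdPhi : ∀ y, E₀ < y → deriv (A (fun u => deriv (A g) u)) y
      = deriv (fun x => ∫ v in E₀..x, Real.sqrt (x - v)
          * deriv (fun y => ∫ u in E₀..y, Real.sqrt (y - u) * g' u) v) y := by
    intro y hy
    apply Filter.EventuallyEq.deriv_eq
    filter_upwards [Ioi_mem_nhds hy] with x hx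
    exact hPhieq x hx
  have hdd : deriv (deriv (A (fun u => deriv (A g) u))) E
      = deriv (deriv (fun x => ∫ v in E₀..x, Real.sqrt (x - v)
          * deriv (fun y => ∫ u in E₀..y, Real.sqrt (y - u) * g' u) v)) E := by
    apply Filter.EventuallyEq.deriv_eq
    filter_upwards [Ioi_mem_nhds hE] with y hy
    exact hdPhi y hy
  rw [hdd, core E₀ g' hg'c E hE, hg'def]
  simp only
  rw [max_eq_left hE.le]
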